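/- Let P be a submonoid of a group G, let B be a unital C*-algebra, and let w : P → B be a map satisfying: (T1) w_e = 1; (T2) ẇ_α = 0 for every neutral word α with K(α) = ∅; (T3) ẇ_α = ẇ_β for all neutral words α, β with K(α) = K(β). Then: (1) w_p* w_p = 1 for every p ∈ P (each w_p is an isometry); (2) w_p w_q = w_{pq} for all p, q ∈ P; (3) the set {ẇ_α : α a neutral word} is a family of mutually commuting self-adjoint projections that is closed under multiplication and contains the identity 1; (4) if F is a finite set of neutral words and α is a neutral word with ⋃_{β∈F} K(β) = K(α) and K(α) ∈ {K(β) : β ∈ F}, then ẇ_α = ∑_{∅≠A⊆F} (−1)^{|A|+1} ∏_{β∈A} ẇ_β. -/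

import Mathlib

namespace PaperToeplitz

variable {G : Type*} [Group G]

/-- A word `(p₁, p₂, …, p_{2k-1}, p_{2k})` in `P`, encoded as its list of consecutive pairs
`[(p₁,p₂), …, (p_{2k-1},p_{2k})]`. Concatenation of words is list append. -/
abbrev Word (P : Submonoid G) : Type _ := List (P × P)

/-- The generalized left quotient `α̇ := p₁⁻¹ p₂ ⋯ p_{2k-1}⁻¹ p_{2k} ∈ G`.
A word is *neutral* if `α̇ = 1`. -/
def dotProd {P : Submonoid G} (α : Word P) : G :=
  (α.map fun x => ((x.1 : G))⁻¹ * (x.2 : G)).prod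

/-- The reverse word `α̃ := (p_{2k}, p_{2k-1}, …, p₂, p₁)`. -/
def rev {P : Submonoid G} (α : Word P) : Word P :=
  α.reverse.map fun x => (x.2, x.1)

/-- The iterated quotient set
`Q(α) := {e, p_{2k}⁻¹p_{2k-1}, p_{2k}⁻¹p_{2k-1}p_{2k-2}⁻¹p_{2k-3}, …, p_{2k}⁻¹p_{2k-1}⋯p₂⁻¹p₁}`,
realized as the set of prefix products. -/
def Qset {P : Submonoid G} (α : Word P) : Set G :=
  {g | ∃ n : ℕ, ((α.reverse.map fun x => ((x.2 : G))⁻¹ * (x.1 : G)).take n).prod = g}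

/-- The left translate `xP = {xq : q ∈ P}` of `P`, as a subset of `G`. -/
def lcos (P : Submonoid G) (x : G) : Set G := {y : G | x⁻¹ * y ∈ P}

/-- The constructible ideal `K(α) := ⋂_{g ∈ Q(α)} gP` (a subset of `P` since `e ∈ Q(α)`). -/
def Kset {P : Submonoid G} (α : Word P) : Set G :=
  ⋂ g ∈ Qset α, lcos P g

/-- The collection `𝔍(P)` of constructible right ideals of `P`. -/
def CIdeals (P : Submonoid G) : Set (Set G) := {S | ∃ α : Word P, Kset α = S}

end PaperToeplitz

namespace PaperToeplitz

open scoped Classical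

/-- For a map `w : P → B` and a word `α = (p₁, …, p_{2k})`,
`ẇ_α := w_{p₁}* w_{p₂} ⋯ w_{p_{2k-1}}* w_{p_{2k}}` (the empty word giving `1`). -/
def dotW {G : Type*} [Group G] {P : Submonoid G} {B : Type*} [Monoid B] [StarMul B]
    (w : P → B) (α : Word P) : B :=
  (α.map fun x => star (w x.1) * w x.2).prod



/- ### Auxiliary lemmas ### -/

section Lists
variable {G : Type*} [Group G]

def Spre (l : List G) : Set G := {g | ∃ n : ℕ, (l.take n).prod = g}

lemma Spre_append {l₁ l₂ : List G} (h : l₁.prod = 1) :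
    Spre (l₁ ++ l₂) = Spre l₁ ∪ Spre l₂ := by
  ext g
  constructor
  · rintro ⟨n, rfl⟩
    rw [List.take_append, List.prod_append]
    by_cases hn : n ≤ l₁.length
    · left
      rw [(by omega : n - l₁.length = 0)]
      exact ⟨n, by simp⟩
    · right
      rw [List.take_of_length_le (by omega), h, one_mul]
      exact ⟨n - l₁.length, rfl⟩
  · rintro (⟨n, rfl⟩ | ⟨n, rfl⟩)
    · by_cases hn : n ≤ l₁.length
      · refine ⟨n, ?_⟩
        rw [List.take_append, List.prod_append,
          (by omega : n - l₁.length = 0)]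
        simp
      · rw [List.take_of_length_le (by omega), h]
        exact ⟨0, by simp⟩
    · refine ⟨l₁.length + n, ?_⟩
      rw [List.take_append, List.prod_append,
        List.take_of_length_le (by omega), h, one_mul, Nat.add_sub_cancel_left]

lemma take_rev_inv_prod {l : List G} (h : l.prod = 1) (n : ℕ) :
    (((l.reverse.map fun x => x⁻¹)).take n).prod = (l.take (l.length - n)).prod := by
  have h1 : (l.reverse.map fun x => x⁻¹).take n
      = ((l.drop (l.length - n)).reverse).map fun x => x⁻¹ := by
    rw [← List.map_take, List.take_reverse]
  have h2 : (((l.drop (l.length - n)).reverse).map fun x => x⁻¹).prod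
      = ((l.drop (l.length - n)).prod)⁻¹ := by
    rw [show ((l.drop (l.length - n)).reverse).map (fun x => x⁻¹)
        = (((l.drop (l.length - n)).map fun x => x⁻¹)).reverse from by
      simp, ← List.prod_inv_reverse]
  rw [h1, h2]
  have h3 : (l.take (l.length - n)).prod * (l.drop (l.length - n)).prod = 1 := by
    rw [← List.prod_append, List.take_append_drop, h]
  exact (inv_eq_of_mul_eq_one_left h3)

lemma Spre_rev_inv {l : List G} (h : l.prod = 1) :
    Spre (l.reverse.map fun x => x⁻¹) = Spre l := by
  ext g
  constructor
  · rintro ⟨n, rfl⟩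
    exact ⟨l.length - n, (take_rev_inv_prod h n).symm⟩
  · rintro ⟨m, rfl⟩
    by_cases hm : m ≤ l.length
    · refine ⟨l.length - m, ?_⟩
      rw [take_rev_inv_prod h, Nat.sub_sub_self hm]
    · refine ⟨0, ?_⟩
      simp only [List.take_zero, List.prod_nil]
      rw [List.take_of_length_le (by omega : l.length ≤ m), h]

end Lists


section InclExcl
variable {B : Type*} [Ring B] [Algebra ℂ B] {ι : Type*} [DecidableEq ι]

set_option linter.unusedSectionVars false

lemma comm_one_sub {x y : B} (h : Commute x y) : Commute (1 - x) (1 - y) :=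
  (Commute.one_right (1 - x)).sub_right ((Commute.one_left y).sub_left h)

noncomputable def plist (f : ι → B) (A : Finset ι) : B := (A.toList.map f).prod

lemma plist_insert (f : ι → B) {A : Finset ι} {a : ι} (ha : a ∉ A)
    (hc : ∀ x ∈ insert a A, ∀ y ∈ insert a A, Commute (f x) (f y)) :
    plist f (insert a A) = f a * plist f A := by
  have hperm : ((insert a A).toList.map f).Perm ((a :: A.toList).map f) :=
    (Finset.toList_insert ha).map f
  have hpw : ((insert a A).toList.map f).Pairwise Commute := by
    apply List.pairwise_of_forall_mem_list
    intro x hx y hy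
    simp only [List.mem_map] at hx hy
    obtain ⟨i, hi, rfl⟩ := hx
    obtain ⟨j, hj, rfl⟩ := hy
    exact hc i (by simpa using hi) j (by simpa using hj)
  calc plist f (insert a A) = ((a :: A.toList).map f).prod := hperm.prod_eq' hpw
    _ = f a * plist f A := by simp [plist]

lemma prod_one_sub_eq (f : ι → B) (F : Finset ι) :
    (∀ x ∈ F, ∀ y ∈ F, Commute (f x) (f y)) →
    plist (fun i => 1 - f i) F = ∑ A ∈ F.powerset, (-1 : ℂ) ^ A.card • plist f A := by
  induction F using Finset.induction_on with
  | empty => intro _; simp [plist]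
  | @insert a F' ha ih =>
    intro hc
    have hc' : ∀ x ∈ F', ∀ y ∈ F', Commute (f x) (f y) := fun x hx y hy =>
      hc x (Finset.mem_insert_of_mem hx) y (Finset.mem_insert_of_mem hy)
    have hL : plist (fun i => 1 - f i) (insert a F')
        = (1 - f a) * plist (fun i => 1 - f i) F' := by
      refine plist_insert _ ha ?_
      intro x hx y hy
      exact comm_one_sub (hc x hx y hy)
    have hdisj : Disjoint F'.powerset (Finset.image (insert a) F'.powerset) := by
      rw [Finset.disjoint_left]
      intro A hA hA'
      obtain ⟨C, hC, rfl⟩ := Finset.mem_image.mp hA'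
      exact ha (Finset.mem_powerset.mp hA (Finset.mem_insert_self a C))
    have hinj : ∀ A ∈ F'.powerset, ∀ C ∈ F'.powerset, insert a A = insert a C → A = C := by
      intro A hA C hC h
      have hpA : a ∉ A := fun hh => ha (Finset.mem_powerset.mp hA hh)
      have hpC : a ∉ C := fun hh => ha (Finset.mem_powerset.mp hC hh)
      rw [← Finset.erase_insert hpA, ← Finset.erase_insert hpC, h]
    rw [hL, ih hc', Finset.powerset_insert, Finset.sum_union hdisj,
      Finset.sum_image hinj]
    have hrec : ∀ A ∈ F'.powerset,
        (-1 : ℂ) ^ (insert a A).card • plist f (insert a A)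
          = -((-1 : ℂ) ^ A.card • (f a * plist f A)) := by
      intro A hA
      have hmem := Finset.mem_powerset.mp hA
      have haA : a ∉ A := fun hh => ha (hmem hh)
      rw [Finset.card_insert_of_notMem haA, plist_insert f haA
        (fun x hx y hy => hc x (Finset.insert_subset_insert a hmem hx)
          y (Finset.insert_subset_insert a hmem hy)),
        pow_succ, mul_neg_one, neg_smul]
    rw [Finset.sum_congr rfl hrec, sub_mul, one_mul, Finset.mul_sum]
    simp only [mul_smul_comm, Finset.sum_neg_distrib]
    abel

lemma one_sub_absorb (f : ι → B) (x : B) (l : List ι)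
    (h : ∀ a ∈ l, x * f a = f a) :
    (1 - x) * (l.map fun i => 1 - f i).prod = 1 - x := by
  induction l with
  | nil => simp
  | cons a l ih =>
    simp only [List.map_cons, List.prod_cons, ← mul_assoc]
    have h1 : (1 - x) * (1 - f a) = 1 - x := by
      have hx := h a (by simp)
      have : (1 - x) * (1 - f a) = 1 - f a - x + x * f a := by noncomm_ring
      rw [this, hx]
      abel
    rw [h1, ih (fun b hb => h b (List.mem_cons_of_mem _ hb))]

lemma inclusion_exclusion (f : ι → B) (F : Finset ι) (x : B)
    (hc : ∀ a ∈ F, ∀ b ∈ F, Commute (f a) (f b))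
    (habs : ∀ a ∈ F, x * f a = f a)
    (i₀ : ι) (hi₀ : i₀ ∈ F) (hfi₀ : f i₀ = x) :
    x = ∑ A ∈ F.powerset.erase ∅, (-1 : ℂ) ^ (A.card + 1) • plist f A := by
  have key : plist (fun i => 1 - f i) F = 1 - x := by
    have hperm : F.toList.Perm (i₀ :: (F.erase i₀).toList) := by
      have h := Finset.toList_insert (Finset.notMem_erase i₀ F)
      rwa [Finset.insert_erase hi₀] at h
    have hpw : (F.toList.map fun i => 1 - f i).Pairwise Commute := by
      apply List.pairwise_of_forall_mem_list
      intro u hu v hv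
      simp only [List.mem_map] at hu hv
      obtain ⟨i, hi, rfl⟩ := hu
      obtain ⟨j, hj, rfl⟩ := hv
      exact comm_one_sub (hc i (by simpa using hi) j (by simpa using hj))
    have h2 : plist (fun i => 1 - f i) F
        = (1 - f i₀) * ((F.erase i₀).toList.map fun i => 1 - f i).prod := by
      have := (hperm.map fun i => 1 - f i).prod_eq' hpw
      simpa [plist] using this
    rw [h2, hfi₀]
    exact one_sub_absorb f x _ (fun a haa =>
      habs a (Finset.mem_of_mem_erase (Finset.mem_toList.mp haa)))
  have expand := prod_one_sub_eq f F hc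
  rw [key] at expand
  have hsplit : ∑ A ∈ F.powerset, (-1 : ℂ) ^ A.card • plist f A
      = 1 + ∑ A ∈ F.powerset.erase ∅, (-1 : ℂ) ^ A.card • plist f A := by
    rw [← Finset.add_sum_erase _ _ (Finset.empty_mem_powerset F)]
    simp [plist]
  rw [hsplit] at expand
  have hx : x = -∑ A ∈ F.powerset.erase ∅, (-1 : ℂ) ^ A.card • plist f A := by
    calc x = 1 - (1 - x) := by abel
    _ = 1 - (1 + ∑ A ∈ F.powerset.erase ∅, (-1 : ℂ) ^ A.card • plist f A) := by rw [expand]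
    _ = -∑ A ∈ F.powerset.erase ∅, (-1 : ℂ) ^ A.card • plist f A := by abel
  rw [hx, ← Finset.sum_neg_distrib]
  refine Finset.sum_congr rfl fun A _ => ?_
  rw [pow_succ, mul_neg_one, neg_smul]

end InclExcl


section WordLemmas
variable {G : Type*} [Group G] {P : Submonoid G}
set_option linter.unusedSectionVars false


def Lw (α : Word P) : List G := α.reverse.map fun x => ((x.2 : G))⁻¹ * (x.1 : G)

lemma Qset_eq_Spre (α : Word P) : Qset α = Spre (Lw α) := rfl

lemma Lw_append (α β : Word P) : Lw (α ++ β) = Lw β ++ Lw α := by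
  simp [Lw]

lemma Lw_prod (α : Word P) : (Lw α).prod = (dotProd α)⁻¹ := by
  rw [Lw, dotProd, List.prod_inv_reverse]
  congr 1
  simp [List.map_map, Function.comp, mul_inv_rev]

lemma Lw_rev (α : Word P) : Lw (rev α) = (Lw α).reverse.map fun x => x⁻¹ := by
  simp [Lw, rev, List.map_map, Function.comp, mul_inv_rev]

lemma dotProd_append (α β : Word P) : dotProd (α ++ β) = dotProd α * dotProd β := by
  simp [dotProd]

lemma dotProd_rev (α : Word P) : dotProd (rev α) = (dotProd α)⁻¹ := by
  have h1 := Lw_prod (rev α)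
  rw [Lw_rev] at h1
  have h2 : ((Lw α).reverse.map fun x => x⁻¹).prod = ((Lw α).prod)⁻¹ := by
    rw [List.prod_inv_reverse, List.map_reverse]
  rw [h2, Lw_prod] at h1
  rw [← inv_inv (dotProd (rev α)), ← h1, inv_inv]

lemma Qset_append {β : Word P} (hβ : dotProd β = 1) (α : Word P) :
    Qset (α ++ β) = Qset α ∪ Qset β := by
  rw [Qset_eq_Spre, Qset_eq_Spre, Qset_eq_Spre, Lw_append,
    Spre_append (by rw [Lw_prod, hβ, inv_one]), Set.union_comm]

lemma Qset_rev {α : Word P} (hα : dotProd α = 1) : Qset (rev α) = Qset α := by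
  rw [Qset_eq_Spre, Qset_eq_Spre, Lw_rev, Spre_rev_inv (by rw [Lw_prod, hα, inv_one])]

lemma Kset_congr {α β : Word P} (h : Qset α = Qset β) : Kset α = Kset β := by
  rw [Kset, Kset, h]

lemma Kset_append {β : Word P} (hβ : dotProd β = 1) (α : Word P) :
    Kset (α ++ β) = Kset α ∩ Kset β := by
  rw [Kset, Qset_append hβ, Set.biInter_union]
  rfl

lemma Qset_nil : Qset ([] : Word P) = {1} := by
  ext g
  constructor
  · rintro ⟨n, rfl⟩
    simp
  · rintro rfl
    exact ⟨0, by simp⟩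

lemma Kset_nil : Kset ([] : Word P) = (P : Set G) := by
  rw [Kset, Qset_nil]
  ext y
  simp [lcos]

lemma Kset_eq_coe {α : Word P} (h : ∀ g ∈ Qset α, ∃ p : P, g = (p : G)⁻¹) :
    Kset α = (P : Set G) := by
  ext y
  simp only [Kset, Set.mem_iInter, lcos, Set.mem_setOf_eq]
  constructor
  · intro hy
    have := hy 1 ⟨0, by simp⟩
    simpa using this
  · intro hy g hg
    obtain ⟨p, rfl⟩ := h g hg
    simpa using P.mul_mem p.2 hy


lemma dotW_append {B : Type*} [Monoid B] [StarMul B] (w : P → B) (α β : Word P) :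
    dotW w (α ++ β) = dotW w α * dotW w β := by simp [dotW]

lemma star_dotW {B : Type*} [Monoid B] [StarMul B] (w : P → B) (α : Word P) :
    star (dotW w α) = dotW w (rev α) := by
  induction α with
  | nil => simp [dotW, rev]
  | cons x α ih =>
    have h1 : (x :: α : Word P) = [x] ++ α := rfl
    have h2 : rev ([x] ++ α : Word P) = rev α ++ [(x.2, x.1)] := by simp [rev]
    rw [h1, dotW_append, star_mul, ih, h2, dotW_append]
    simp [dotW, star_mul]

end WordLemmas


/-- If `w : P → B` is a map into a unital C*-algebra satisfying (T1) `w_e = 1`,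
(T2) `ẇ_α = 0` for neutral `α` with `K(α) = ∅`, and (T3) `ẇ_α = ẇ_β` for neutral words with
`K(α) = K(β)`, then: (1) each `w_p` is an isometry; (2) `w` is multiplicative;
(3) the `ẇ_α`, `α` neutral, form a commuting family of self-adjoint projections closed
under multiplication and containing `1`; and (4) the inclusion-exclusion identity
`ẇ_α = ∑_{∅≠A⊆F} (−1)^{|A|+1} ∏_{β∈A} ẇ_β` holds whenever `F` is a finite set of neutral
words with `⋃_{β∈F} K(β) = K(α)` for a neutral word `α` with `K(α) ∈ {K(β) : β ∈ F}`. -/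
theorem statement6 {G : Type*} [Group G] (P : Submonoid G)
    {B : Type*} [CStarAlgebra B] (w : P → B)
    (hT1 : w 1 = 1)
    (hT2 : ∀ α : Word P, dotProd α = 1 → Kset α = (∅ : Set G) → dotW w α = 0)
    (hT3 : ∀ α β : Word P, dotProd α = 1 → dotProd β = 1 → Kset α = Kset β →
      dotW w α = dotW w β) :
    (∀ p : P, star (w p) * w p = 1) ∧
    (∀ p q : P, w p * w q = w (p * q)) ∧
    ((∀ α : Word P, dotProd α = 1 →
        IsSelfAdjoint (dotW w α) ∧ dotW w α * dotW w α = dotW w α) ∧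
      (∀ α β : Word P, dotProd α = 1 → dotProd β = 1 →
        Commute (dotW w α) (dotW w β)) ∧
      (∀ α β : Word P, dotProd α = 1 → dotProd β = 1 →
        ∃ γ : Word P, dotProd γ = 1 ∧ dotW w γ = dotW w α * dotW w β) ∧
      (∃ γ : Word P, dotProd γ = 1 ∧ dotW w γ = 1)) ∧
    (∀ (F : Finset (Word P)) (α : Word P), (∀ β ∈ F, dotProd β = 1) → dotProd α = 1 →
      (⋃ β ∈ F, Kset β) = Kset α → (∃ β ∈ F, Kset β = Kset α) →
      dotW w α = ∑ A ∈ F.powerset.erase ∅,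
        ((-1 : ℂ)) ^ (A.card + 1) • (A.toList.map (dotW w)).prod) := by
  classical
  -- (1) isometries
  have h1 : ∀ p : P, star (w p) * w p = 1 := by
    intro p
    have hn : dotProd [(p, p)] = 1 := by simp [dotProd]
    have hK : Kset [(p, p)] = Kset ([] : Word P) := by
      rw [Kset_nil]
      apply Kset_eq_coe
      rintro g ⟨n, rfl⟩
      rcases n with _ | n
      · exact ⟨1, by simp⟩
      · exact ⟨1, by simp⟩
    have h := hT3 [(p, p)] [] hn (by simp [dotProd]) hK
    simpa [dotW] using h
  -- (2) multiplicativity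
  have h2 : ∀ p q : P, w p * w q = w (p * q) := by
    intro p q
    have hn : dotProd [(p * q, p), (1, q)] = 1 := by
      simp [dotProd]
    have hK : Kset [(p * q, p), (1, q)] = Kset ([] : Word P) := by
      rw [Kset_nil]
      apply Kset_eq_coe
      rintro g ⟨n, rfl⟩
      rcases n with _ | _ | n
      · exact ⟨1, by simp⟩
      · exact ⟨q, by simp⟩
      · refine ⟨1, ?_⟩
        simp
    have hv := hT3 [(p * q, p), (1, q)] [] hn (by simp [dotProd]) hK
    have huv : star (w (p * q)) * (w p * w q) = 1 := by
      simpa [dotW, hT1, mul_assoc] using hv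
    have hvu : star (w p * w q) * w (p * q) = 1 := by
      have h := congrArg star huv
      simpa [star_mul, star_star, mul_assoc] using h
    have hvv : star (w p * w q) * (w p * w q) = 1 := by
      rw [star_mul, mul_assoc, ← mul_assoc (star (w p)), h1 p, one_mul, h1 q]
    have hzero : star ((w p * w q) - w (p * q)) * ((w p * w q) - w (p * q)) = 0 := by
      rw [star_sub, sub_mul, mul_sub, mul_sub, huv, hvu, hvv, h1 (p * q)]
      abel
    have := sub_eq_zero.mp ((CStarRing.star_mul_self_eq_zero_iff _).mp hzero)
    exact this
  -- (3) projections
  have hsa : ∀ α : Word P, dotProd α = 1 → IsSelfAdjoint (dotW w α) := by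
    intro α hα
    have h := hT3 (rev α) α (by rw [dotProd_rev, hα, inv_one]) hα
      (Kset_congr (Qset_rev hα))
    exact isSelfAdjoint_iff.mpr ((star_dotW w α).trans h)
  have hidem : ∀ α : Word P, dotProd α = 1 → dotW w α * dotW w α = dotW w α := by
    intro α hα
    rw [← dotW_append]
    exact hT3 (α ++ α) α (by rw [dotProd_append, hα, one_mul]) hα
      (by rw [Kset_append hα, Set.inter_self])
  have hcomm : ∀ α β : Word P, dotProd α = 1 → dotProd β = 1 →
      Commute (dotW w α) (dotW w β) := by
    intro α β hα hβ
    show dotW w α * dotW w β = dotW w β * dotW w α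
    rw [← dotW_append, ← dotW_append]
    exact hT3 (α ++ β) (β ++ α) (by rw [dotProd_append, hα, hβ, one_mul])
      (by rw [dotProd_append, hα, hβ, one_mul])
      (by rw [Kset_append hβ, Kset_append hα, Set.inter_comm])
  refine ⟨h1, h2, ⟨fun α hα => ⟨hsa α hα, hidem α hα⟩, hcomm,
    fun α β hα hβ => ⟨α ++ β, by rw [dotProd_append, hα, hβ, one_mul],
      dotW_append w α β⟩, ⟨[], rfl, rfl⟩⟩, ?_⟩
  -- (4) inclusion–exclusion
  intro F α hF hα hU hex
  obtain ⟨β₀, hβ₀F, hβ₀K⟩ := hex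
  have habs : ∀ β ∈ F, dotW w α * dotW w β = dotW w β := by
    intro β hβ
    have hsub : Kset β ⊆ Kset α := by
      rw [← hU]
      exact Set.subset_biUnion_of_mem hβ
    have hK : Kset (α ++ β) = Kset β := by
      rw [Kset_append (hF β hβ)]
      exact Set.inter_eq_self_of_subset_right hsub
    have h := hT3 (α ++ β) β (by rw [dotProd_append, hα, hF β hβ, one_mul])
      (hF β hβ) hK
    rwa [dotW_append] at h
  have hcomm' : ∀ a ∈ F, ∀ b ∈ F, Commute (dotW w a) (dotW w b) :=
    fun a ha b hb => hcomm a b (hF a ha) (hF b hb)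
  have h := inclusion_exclusion (dotW w) F (dotW w α) hcomm' habs β₀ hβ₀F
    (hT3 β₀ α (hF _ hβ₀F) hα hβ₀K)
  simpa [plist] using h

end PaperToeplitz
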